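/- arXiv:2309.10766 — 6 statements merged into one kernel-verified Lean document; each statement's English description precedes it below -/
import Mathlib

section
/- Suppose c is monotone submodular and f is monotone supermodular. Let 0 ≤ α < α', let S_α be any maximizer of S ↦ α·f(S) − c(S), and let S_{α'} be a maximizer of S ↦ α'·f(S) − c(S) that is maximal with respect to inclusion among maximizers. Then S_α ⊆ S_{α'}. -/
/-- With monotone submodular costs and monotone supermodular
rewards, if `0 ≤ α < α'`, `S_α` is any maximizer at `α`, and `S_{α'}` is an
inclusion-maximal maximizer at `α'`, then `S_α ⊆ S_{α'}`. -/
theorem stmt5 {A : Type*} [Fintype A] [DecidableEq A]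
    (f c : Finset A → ℝ)
    (hcmono : ∀ S T : Finset A, S ⊆ T → c S ≤ c T)
    (hcsub : ∀ S T : Finset A, c (S ∪ T) + c (S ∩ T) ≤ c S + c T)
    (hfmono : ∀ S T : Finset A, S ⊆ T → f S ≤ f T)
    (hfsuper : ∀ S T : Finset A, f S + f T ≤ f (S ∪ T) + f (S ∩ T))
    (α α' : ℝ) (hα : 0 ≤ α) (hαα' : α < α')
    (Sα Sα' : Finset A)
    (hSα : ∀ S : Finset A, α * f S - c S ≤ α * f Sα - c Sα)
    (hSα' : ∀ S : Finset A, α' * f S - c S ≤ α' * f Sα' - c Sα')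
    (hmax : ∀ T : Finset A,
      (∀ S : Finset A, α' * f S - c S ≤ α' * f T - c T) → ¬ Sα' ⊂ T) :
    Sα ⊆ Sα' := by
  set U := Sα ∪ Sα' with hU
  set I := Sα ∩ Sα' with hI
  -- key: c U - c Sα' ≤ c Sα - c I
  have hc : c U - c Sα' ≤ c Sα - c I := by
    have := hcsub Sα Sα'
    linarith
  have hf : f Sα - f I ≤ f U - f Sα' := by
    have := hfsuper Sα Sα'
    linarith
  have h1 : c Sα - c I ≤ α * (f Sα - f I) := by
    have := hSα I
    linarith
  have hfI : f I ≤ f Sα := hfmono _ _ Finset.inter_subset_left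
  have h2 : α * (f Sα - f I) ≤ α' * (f Sα - f I) := by
    apply mul_le_mul_of_nonneg_right (le_of_lt hαα')
    linarith
  have h3 : α' * (f Sα - f I) ≤ α' * (f U - f Sα') := by
    apply mul_le_mul_of_nonneg_left hf
    linarith
  have hUmax : ∀ S : Finset A, α' * f S - c S ≤ α' * f U - c U := by
    intro S
    have := hSα' S
    nlinarith
  have := hmax U hUmax
  have hsub : Sα' ⊆ U := Finset.subset_union_right
  have : Sα' = U := by
    by_contra h
    exact this (Finset.ssubset_iff_subset_ne.mpr ⟨hsub, h⟩)
  intro x hx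
  rw [this]
  exact Finset.mem_union_left _ hx
end

section
/- Suppose c is monotone submodular and f is monotone supermodular. Then the number of distinct sets that arise as inclusion-maximal maximizers of S ↦ α·f(S) − c(S) as α ranges over [0,1] is at most |A| + 1. -/
/-- With monotone submodular costs and monotone supermodular
rewards, the number of distinct inclusion-maximal maximizers of
`S ↦ α·f(S) − c(S)`, as `α` ranges over `[0,1]`, is at most `|A| + 1`. -/
theorem stmt6 {A : Type*} [Fintype A] [DecidableEq A]
    (f c : Finset A → ℝ)
    (hcmono : ∀ S T : Finset A, S ⊆ T → c S ≤ c T)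
    (hcsub : ∀ S T : Finset A, c (S ∪ T) + c (S ∩ T) ≤ c S + c T)
    (hfmono : ∀ S T : Finset A, S ⊆ T → f S ≤ f T)
    (hfsuper : ∀ S T : Finset A, f S + f T ≤ f (S ∪ T) + f (S ∩ T))
    (D : ℝ → Finset A)
    (hDmax : ∀ α ∈ Set.Icc (0:ℝ) 1,
      ∀ S : Finset A, α * f S - c S ≤ α * f (D α) - c (D α))
    (hDtop : ∀ α ∈ Set.Icc (0:ℝ) 1, ∀ T : Finset A,
      (∀ S : Finset A, α * f S - c S ≤ α * f T - c T) → ¬ D α ⊂ T) :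
    (D '' Set.Icc (0:ℝ) 1).ncard ≤ Fintype.card A + 1 := by
  -- Step 1: D is monotone on [0,1]
  have mono : ∀ α ∈ Set.Icc (0:ℝ) 1, ∀ β ∈ Set.Icc (0:ℝ) 1, α ≤ β → D α ⊆ D β := by
    intro α hα β hβ hab
    set S := D α with hS
    set T := D β with hT
    -- S ∪ T is a maximizer at β
    have h1 : α * f (S ∩ T) - c (S ∩ T) ≤ α * f S - c S := hDmax α hα (S ∩ T)
    have h2 : c (S ∪ T) - c T ≤ c S - c (S ∩ T) := by
      have := hcsub S T; linarith
    have h3 : α * (f S - f (S ∩ T)) ≤ α * (f (S ∪ T) - f T) := by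
      apply mul_le_mul_of_nonneg_left _ hα.1
      have := hfsuper S T; linarith
    have h4 : α * (f (S ∪ T) - f T) ≤ β * (f (S ∪ T) - f T) := by
      apply mul_le_mul_of_nonneg_right hab
      have := hfmono T (S ∪ T) Finset.subset_union_right; linarith
    have hmaxST : β * f T - c T ≤ β * f (S ∪ T) - c (S ∪ T) := by nlinarith
    have hmax : ∀ U : Finset A, β * f U - c U ≤ β * f (S ∪ T) - c (S ∪ T) := by
      intro U; exact le_trans (hDmax β hβ U) hmaxST
    have hnot := hDtop β hβ (S ∪ T) hmax
    have hsub : T ⊆ S ∪ T := Finset.subset_union_right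
    have : T = S ∪ T := by
      by_contra hne
      exact hnot ⟨hsub, fun h => hne (Finset.Subset.antisymm hsub h)⟩
    intro x hx
    rw [this]
    exact Finset.mem_union_left _ hx
  -- Step 2: the image is a chain
  have chain : ∀ X ∈ D '' Set.Icc (0:ℝ) 1, ∀ Y ∈ D '' Set.Icc (0:ℝ) 1, X ⊆ Y ∨ Y ⊆ X := by
    rintro X ⟨α, hα, rfl⟩ Y ⟨β, hβ, rfl⟩
    rcases le_total α β with h | h
    · exact Or.inl (mono α hα β hβ h)
    · exact Or.inr (mono β hβ α hα h)
  -- Step 3: card is injective on the image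
  have hinj : Set.InjOn Finset.card (D '' Set.Icc (0:ℝ) 1) := by
    intro X hX Y hY hcard
    rcases chain X hX Y hY with h | h
    · exact Finset.eq_of_subset_of_card_le h (le_of_eq hcard.symm)
    · exact (Finset.eq_of_subset_of_card_le h (le_of_eq hcard)).symm
  have := Set.ncard_image_of_injOn hinj
  rw [← this]
  have hsub : (Finset.card '' (D '' Set.Icc (0:ℝ) 1)) ⊆ Set.Iic (Fintype.card A) := by
    rintro k ⟨X, _, rfl⟩
    exact Finset.card_le_univ X
  calc (Finset.card '' (D '' Set.Icc (0:ℝ) 1)).ncard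
      ≤ (Set.Iic (Fintype.card A)).ncard :=
        Set.ncard_le_ncard hsub (Set.finite_Iic _)
    _ = Fintype.card A + 1 := by
        rw [← Nat.card_coe_set_eq, Nat.card_eq_card_toFinset]
        simp
end

section
/- For every cost function c : 2^A → ℝ≥0 and reward function f : 2^A → [0,1], the optimal contract α* ∈ [0,1] maximizing the principal's utility (1−α)·f(S_α) is attained at a critical value, i.e., at a point α where the demanded set changes (or at α = 0), assuming the agent breaks ties in favor of higher f. -/
/-- For nonnegative costs and rewards in `[0,1]`, with the
agent's best response `S : ℝ → Finset A` (a utility maximizer, breaking ties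
in favor of higher `f`), the principal's utility `(1−α)·f(S_α)` attains its
supremum over `[0,1]` at some point which is either `0` or a critical value,
i.e. a point where the demanded set differs from the demand just below it. -/
theorem stmt11 {A : Type*} [Fintype A] [DecidableEq A]
    (f c : Finset A → ℝ)
    (hc : ∀ T : Finset A, 0 ≤ c T)
    (hf : ∀ T : Finset A, f T ∈ Set.Icc (0:ℝ) 1)
    (S : ℝ → Finset A)
    (hmax : ∀ α : ℝ, ∀ T : Finset A,
      α * f T - c T ≤ α * f (S α) - c (S α))
    (htie : ∀ α : ℝ, ∀ T : Finset A,
      α * f T - c T = α * f (S α) - c (S α) → f T ≤ f (S α)) :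
    ∃ αopt ∈ Set.Icc (0:ℝ) 1,
      (∀ α ∈ Set.Icc (0:ℝ) 1, (1 - α) * f (S α) ≤ (1 - αopt) * f (S αopt)) ∧
      (αopt = 0 ∨ ∃ ε₀ > 0, ∀ ε ∈ Set.Ioo 0 ε₀, S (αopt - ε) ≠ S αopt) := by
  classical
  -- monotonicity of f ∘ S
  have mono : ∀ a b : ℝ, a ≤ b → f (S a) ≤ f (S b) := by
    intro a b hab
    rcases eq_or_lt_of_le hab with h | h
    · exact h ▸ le_refl _
    · have h1 := hmax a (S b)
      have h2 := hmax b (S a)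
      nlinarith
  set g : ℝ → ℝ := fun α => (1 - α) * f (S α) with hg
  set I : Finset A → Set ℝ := fun T => {x | x ∈ Set.Icc (0:ℝ) 1 ∧ S x = T} with hI
  set β : Finset A → ℝ := fun T => sInf (I T) with hβ
  have key : ∀ T : Finset A, (I T).Nonempty →
      β T ∈ Set.Icc (0:ℝ) 1 ∧ ∀ α ∈ I T, g α ≤ g (β T) := by
    intro T hne
    obtain ⟨α₀, hα₀⟩ := hne
    have hbdd : BddBelow (I T) := ⟨0, fun x hx => hx.1.1⟩
    have hβ0 : 0 ≤ β T := le_csInf ⟨α₀, hα₀⟩ (fun x hx => hx.1.1)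
    have hβα₀ : β T ≤ α₀ := csInf_le hbdd hα₀
    have hβ1 : β T ≤ 1 := hβα₀.trans hα₀.1.2
    have hfle : f (S (β T)) ≤ f T := by
      have := mono (β T) α₀ hβα₀
      rwa [hα₀.2] at this
    -- the inf is still a point where T is (weakly) optimal
    have hL : β T * f (S (β T)) - c (S (β T)) ≤ β T * f T - c T := by
      by_contra hcon
      push_neg at hcon
      set a : ℝ := f T - f (S (β T)) with ha_def
      have ha : 0 ≤ a := by simp [ha_def]; linarith
      set D : ℝ := (β T * f (S (β T)) - c (S (β T))) - (β T * f T - c T) with hD_def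
      have hD : 0 < D := by simp [hD_def]; linarith
      have hε : 0 < D / (a + 1) := by positivity
      obtain ⟨x, hx, hxlt⟩ := (csInf_lt_iff hbdd ⟨α₀, hα₀⟩).mp
        (lt_add_of_pos_right (β T) hε)
      have hβx : β T ≤ x := csInf_le hbdd hx
      -- at x, the demanded set is T, hence T beats S (β T)
      have hx2 : x * f (S (β T)) - c (S (β T)) ≤ x * f T - c T := by
        have := hmax x (S (β T))
        rwa [hx.2] at this
      -- combine: D ≤ (x - β T) * a < D
      have h1 : D ≤ (x - β T) * a := by
        simp only [hD_def, ha_def]; nlinarith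
      have h2 : (x - β T) * a ≤ (D / (a + 1)) * a := by
        apply mul_le_mul_of_nonneg_right _ ha
        linarith
      have h3 : (D / (a + 1)) * a < D := by
        rw [div_mul_eq_mul_div, div_lt_iff₀ (by linarith)]
        nlinarith
      linarith
    have heq : β T * f T - c T = β T * f (S (β T)) - c (S (β T)) :=
      le_antisymm (hmax _ T) hL
    have hfge : f T ≤ f (S (β T)) := htie _ T heq
    have hfeq : f (S (β T)) = f T := le_antisymm hfle hfge
    refine ⟨⟨hβ0, hβ1⟩, ?_⟩
    intro α hα
    have hβα : β T ≤ α := csInf_le hbdd hα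
    simp only [hg, hfeq, hα.2]
    exact mul_le_mul_of_nonneg_right (by linarith) (hf T).1
  have hβmem : ∀ T : Finset A, β T ∈ Set.Icc (0:ℝ) 1 := by
    intro T
    by_cases h : (I T).Nonempty
    · exact (key T h).1
    · rw [Set.not_nonempty_iff_eq_empty] at h
      simp only [hβ, h, Real.sInf_empty]
      exact ⟨le_refl 0, zero_le_one⟩
  -- choose the best candidate among the finitely many β T
  obtain ⟨T0, hT0⟩ := Finite.exists_max (fun T : Finset A => g (β T))
  have hopt : ∀ α ∈ Set.Icc (0:ℝ) 1, g α ≤ g (β T0) := by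
    intro α hα
    have hαI : α ∈ I (S α) := ⟨hα, rfl⟩
    calc g α ≤ g (β (S α)) := (key (S α) ⟨α, hαI⟩).2 α hαI
      _ ≤ g (β T0) := hT0 (S α)
  set αo : ℝ := β T0 with hαo
  by_cases hf0 : f (S αo) = 0
  · -- the optimum value is 0, so α = 0 also works
    refine ⟨0, ⟨le_refl 0, zero_le_one⟩, ?_, Or.inl rfl⟩
    intro α hα
    have h1 : g α ≤ g αo := hopt α hα
    have h2 : g αo = 0 := by simp [hg, hf0]
    have h3 : (0:ℝ) ≤ f (S 0) := (hf _).1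
    simp only [hg] at h1 h2 ⊢
    rw [h2] at h1
    linarith
  · have hfpos : 0 < f (S αo) := lt_of_le_of_ne (hf _).1 (Ne.symm hf0)
    rcases eq_or_lt_of_le (hβmem T0).1 with h0 | h0
    · exact ⟨αo, hβmem T0, hopt, Or.inl h0.symm⟩
    · refine ⟨αo, hβmem T0, hopt, Or.inr ⟨αo, h0, ?_⟩⟩
      intro ε hε hSeq
      have hmem : αo - ε ∈ Set.Icc (0:ℝ) 1 := by
        constructor
        · linarith [hε.2]
        · linarith [(hβmem T0).2, hε.1]
      have := hopt (αo - ε) hmem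
      simp only [hg, hSeq] at this
      nlinarith [hε.1]
end

section
/- In the matching-based setting with one-sided costs (c_{v,u} = c_u for all edges (v,u)) and nonnegative edge rewards, for every contract α ∈ [0,1]: if T_α ⊆ U maximizes α·f'(T) − Σ_{u∈T} c_u over T ⊆ U, where f'(T) is the max-weight matching value in the subgraph induced by V and T, then the max-weight matching A(T_α) in the subgraph induced by T_α achieves max over matchings S ⊆ A of α·f(S) − c(S). -/
/-- A set of edges of a bipartite graph (edges are pairs in `V × U`) is a
matching if no two distinct edges share an endpoint. -/
def IsBipMatching {V U : Type*} (M : Finset (V × U)) : Prop :=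
  ∀ e ∈ M, ∀ e' ∈ M, e ≠ e' → e.1 ≠ e'.1 ∧ e.2 ≠ e'.2

/-- One-sided costs. If `T_α ⊆ U` maximizes
`α·f'(T) − Σ_{u ∈ T} c_u`, where `f'(T)` is the max weight of a matching in
`A` whose `U`-endpoints lie in `T`, then any max-weight matching `M` whose
`U`-endpoints lie in `T_α` (i.e. achieving `f'(T_α)`) maximizes
`α·f(S) − c(S)` over all matchings `S ⊆ A`. -/
theorem stmt15 {V U : Type*} [Fintype V] [Fintype U]
    [DecidableEq V] [DecidableEq U]
    (A : Finset (V × U)) (fw : V × U → ℝ) (cu : U → ℝ)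
    (hfw : ∀ e ∈ A, 0 ≤ fw e) (hcu : ∀ u : U, 0 ≤ cu u)
    (α : ℝ) (hα : α ∈ Set.Icc (0:ℝ) 1)
    [DecidablePred (IsBipMatching (V := V) (U := U))]
    (f' : Finset U → ℝ)
    (hf' : ∀ T : Finset U,
      f' T = ((A.powerset.filter (fun M =>
          IsBipMatching M ∧ M.image Prod.snd ⊆ T)).sup'
        ⟨∅, by simp [IsBipMatching]⟩ (fun M => ∑ e ∈ M, fw e)))
    (Tα : Finset U)
    (hTα : ∀ T : Finset U,
      α * f' T - ∑ u ∈ T, cu u ≤ α * f' Tα - ∑ u ∈ Tα, cu u)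
    (M : Finset (V × U)) (hMA : M ⊆ A) (hMm : IsBipMatching M)
    (hMT : M.image Prod.snd ⊆ Tα)
    (hMopt : (∑ e ∈ M, fw e) = f' Tα) :
    ∀ S : Finset (V × U), S ⊆ A → IsBipMatching S →
      α * (∑ e ∈ S, fw e) - (∑ e ∈ S, cu e.2) ≤
        α * (∑ e ∈ M, fw e) - (∑ e ∈ M, cu e.2) := by
  intro S hSA hSm
  have hα0 := hα.1
  have hinjS : ∀ e ∈ S, ∀ e' ∈ S, e.2 = e'.2 → e = e' := by
    intro e he e' he' h
    by_contra hne
    exact (hSm e he e' he' hne).2 h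
  have hcS : ∑ u ∈ S.image Prod.snd, cu u = ∑ e ∈ S, cu e.2 :=
    Finset.sum_image hinjS
  have hfS : ∑ e ∈ S, fw e ≤ f' (S.image Prod.snd) := by
    rw [hf']
    have hmem : S ∈ A.powerset.filter (fun M =>
        IsBipMatching M ∧ M.image Prod.snd ⊆ S.image Prod.snd) := by
      simp only [Finset.mem_filter, Finset.mem_powerset]
      exact ⟨hSA, hSm, le_refl _⟩
    exact Finset.le_sup' (fun M => ∑ e ∈ M, fw e) hmem
  have hinjM : ∀ e ∈ M, ∀ e' ∈ M, e.2 = e'.2 → e = e' := by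
    intro e he e' he' h
    by_contra hne
    exact (hMm e he e' he' hne).2 h
  have hcM : ∑ e ∈ M, cu e.2 ≤ ∑ u ∈ Tα, cu u := by
    rw [← Finset.sum_image hinjM]
    exact Finset.sum_le_sum_of_subset_of_nonneg hMT fun u _ _ => hcu u
  have key := hTα (S.image Prod.snd)
  rw [← hMopt] at key
  have hmul : α * (∑ e ∈ S, fw e) ≤ α * f' (S.image Prod.snd) :=
    mul_le_mul_of_nonneg_left hfS hα0
  linarith
end

section
/- In the matching-based setting with one-sided costs, if S_α is a matching maximizing α·f(S) − c(S) over all matchings S ⊆ A, then the set U(S_α) of U-vertices matched by S_α maximizes α·f'(T) − c'(T) over all T ⊆ U, and the two optimal values are equal. -/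
/-- One-sided costs. If a matching `S_α ⊆ A` maximizes
`α·f(S) − c(S)` over all matchings in `A`, then its set `U(S_α)` of matched
`U`-vertices maximizes `α·f'(T) − c'(T)` over `T ⊆ U`, and the two optimal
values coincide. -/
theorem stmt16 {V U : Type*} [Fintype V] [Fintype U]
    [DecidableEq V] [DecidableEq U]
    (A : Finset (V × U)) (fw : V × U → ℝ) (cu : U → ℝ)
    (hfw : ∀ e ∈ A, 0 ≤ fw e) (hcu : ∀ u : U, 0 ≤ cu u)
    (α : ℝ) (hα : α ∈ Set.Icc (0:ℝ) 1)
    [DecidablePred (IsBipMatching (V := V) (U := U))]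
    (f' : Finset U → ℝ)
    (hf' : ∀ T : Finset U,
      f' T = ((A.powerset.filter (fun M =>
          IsBipMatching M ∧ M.image Prod.snd ⊆ T)).sup'
        ⟨∅, by simp [IsBipMatching]⟩ (fun M => ∑ e ∈ M, fw e)))
    (Sα : Finset (V × U)) (hSαA : Sα ⊆ A) (hSαm : IsBipMatching Sα)
    (hSαopt : ∀ S : Finset (V × U), S ⊆ A → IsBipMatching S →
      α * (∑ e ∈ S, fw e) - (∑ e ∈ S, cu e.2) ≤
        α * (∑ e ∈ Sα, fw e) - (∑ e ∈ Sα, cu e.2)) :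
    (∀ T : Finset U,
      α * f' T - ∑ u ∈ T, cu u ≤
        α * f' (Sα.image Prod.snd) - ∑ u ∈ Sα.image Prod.snd, cu u) ∧
    α * f' (Sα.image Prod.snd) - (∑ u ∈ Sα.image Prod.snd, cu u) =
      α * (∑ e ∈ Sα, fw e) - (∑ e ∈ Sα, cu e.2) := by
  obtain ⟨hα0, hα1⟩ := hα
  have csum : ∀ M : Finset (V × U), IsBipMatching M →
      ∑ u ∈ M.image Prod.snd, cu u = ∑ e ∈ M, cu e.2 := by
    intro M hM
    apply Finset.sum_image
    intro x hx y hy hxy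
    by_contra h
    exact (hM x hx y hy h).2 hxy
  have key : ∀ T : Finset U,
      α * f' T - ∑ u ∈ T, cu u ≤ α * (∑ e ∈ Sα, fw e) - ∑ e ∈ Sα, cu e.2 := by
    intro T
    rw [hf' T]
    obtain ⟨M, hMmem, hMeq⟩ := Finset.exists_mem_eq_sup'
      (⟨∅, by simp [IsBipMatching]⟩ : (A.powerset.filter (fun M =>
          IsBipMatching M ∧ M.image Prod.snd ⊆ T)).Nonempty)
      (fun M => ∑ e ∈ M, fw e)
    rw [hMeq]
    simp only [Finset.mem_filter, Finset.mem_powerset] at hMmem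
    obtain ⟨hMA, hMm, hMT⟩ := hMmem
    have hcM : ∑ e ∈ M, cu e.2 ≤ ∑ u ∈ T, cu u := by
      rw [← csum M hMm]
      exact Finset.sum_le_sum_of_subset_of_nonneg hMT (fun u _ _ => hcu u)
    have := hSαopt M hMA hMm
    linarith
  have hSmem : Sα ∈ A.powerset.filter (fun M =>
      IsBipMatching M ∧ M.image Prod.snd ⊆ Sα.image Prod.snd) := by
    simp [Finset.mem_filter, Finset.mem_powerset, hSαA, hSαm]
  have hlow : α * (∑ e ∈ Sα, fw e) - ∑ e ∈ Sα, cu e.2 ≤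
      α * f' (Sα.image Prod.snd) - ∑ u ∈ Sα.image Prod.snd, cu u := by
    rw [hf', csum Sα hSαm]
    have hle : (∑ e ∈ Sα, fw e) ≤ (A.powerset.filter (fun M =>
        IsBipMatching M ∧ M.image Prod.snd ⊆ Sα.image Prod.snd)).sup'
        ⟨∅, by simp [IsBipMatching]⟩ (fun M => ∑ e ∈ M, fw e) :=
      Finset.le_sup' (fun M => ∑ e ∈ M, fw e) hSmem
    have := mul_le_mul_of_nonneg_left hle hα0
    linarith
  have heq := le_antisymm (key (Sα.image Prod.snd)) hlow
  exact ⟨fun T => (key T).trans_eq heq.symm, heq⟩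
end

section
/- Let f be a matching-based reward function on a bipartite graph with n edges whose edge rewards take at most k distinct values. Then the number of distinct values of f(S) over matchings S of the graph is at most Σ_{j=0}^{n} C(j+k−1, j), and hence the number of critical values of the contract problem is O(n^{k+1}) for constant k. -/

lemma sym_card_le {α : Type*} [DecidableEq α] (s : Finset α) (j : ℕ) :
    (s.sym j).card ≤ (s.card + j - 1).choose j := by
  classical
  have h1 : s.sym j ⊆ Finset.univ.image
      (Sym.map (Subtype.val : {x // x ∈ s} → α)) := by
    intro m hm
    rw [Finset.mem_sym_iff] at hm
    refine Finset.mem_image.2 ⟨Sym.mk (m.1.attach.map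
        (fun x => (⟨x.1, hm x.1 x.2⟩ : {x // x ∈ s}))) (by simp [m.2]), Finset.mem_univ _, ?_⟩
    apply Sym.coe_injective
    simp [Sym.map, Multiset.map_map]
  calc (s.sym j).card ≤ _ := Finset.card_le_card h1
    _ ≤ Fintype.card (Sym {x // x ∈ s} j) := by
        exact Finset.card_image_le.trans_eq Finset.card_univ
    _ = (s.card + j - 1).choose j := by
        rw [Sym.card_sym_eq_choose, Fintype.card_coe]

/-- If the edge rewards of a bipartite graph with `n` edges
take at most `k` distinct values, then the number of distinct values of
`f(S) = Σ_{e ∈ S} f_e` over matchings `S` is at most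
`Σ_{j=0}^{n} C(j+k−1, j)`; consequently any set of critical values (whose
best responses are matchings with pairwise distinct `f`-values) has
cardinality at most this sum. -/
theorem stmt18 {V U : Type*} [Fintype V] [Fintype U]
    [DecidableEq V] [DecidableEq U]
    (A : Finset (V × U)) (fe : V × U → ℝ) (n k : ℕ)
    (hn : A.card = n) (hk : (A.image fe).card ≤ k)
    [DecidablePred (IsBipMatching (V := V) (U := U))]
    (CV : Finset ℝ) (Sfun : ℝ → Finset (V × U))
    (hSfun : ∀ α ∈ CV, Sfun α ⊆ A ∧ IsBipMatching (Sfun α))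
    (hdist : ∀ α ∈ CV, ∀ β ∈ CV, α ≠ β →
      (∑ e ∈ Sfun α, fe e) ≠ ∑ e ∈ Sfun β, fe e) :
    ((A.powerset.filter IsBipMatching).image
        (fun S => ∑ e ∈ S, fe e)).card ≤
      (∑ j ∈ Finset.range (n + 1), (j + k - 1).choose j) ∧
    CV.card ≤ ∑ j ∈ Finset.range (n + 1), (j + k - 1).choose j := by
  classical
  set s := A.image fe with hs
  have key : ((A.powerset.filter IsBipMatching).image (fun S => ∑ e ∈ S, fe e)).card ≤
      ∑ j ∈ Finset.range (n + 1), (j + k - 1).choose j := by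
    have hsub : (A.powerset.filter IsBipMatching).image (fun S => ∑ e ∈ S, fe e) ⊆
        (Finset.range (n + 1)).biUnion
          (fun j => (s.sym j).image (fun m => (Sym.toMultiset m).sum)) := by
      intro x hx
      simp only [Finset.mem_image, Finset.mem_filter, Finset.mem_powerset] at hx
      obtain ⟨S, ⟨hSA, _⟩, rfl⟩ := hx
      refine Finset.mem_biUnion.2 ⟨S.card, Finset.mem_range.2
          (Nat.lt_succ_of_le (hn ▸ Finset.card_le_card hSA)), ?_⟩
      refine Finset.mem_image.2 ⟨⟨S.val.map fe, by simp⟩, ?_, ?_⟩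
      · refine Finset.mem_sym_iff.2 ?_
        intro a ha
        obtain ⟨e, he, rfl⟩ := Multiset.mem_map.1 ha
        exact Finset.mem_image_of_mem fe (hSA he)
      · rfl
    calc ((A.powerset.filter IsBipMatching).image (fun S => ∑ e ∈ S, fe e)).card
        ≤ _ := Finset.card_le_card hsub
      _ ≤ ∑ j ∈ Finset.range (n + 1),
            ((s.sym j).image (fun m => (Sym.toMultiset m).sum)).card :=
          Finset.card_biUnion_le
      _ ≤ ∑ j ∈ Finset.range (n + 1), (j + k - 1).choose j := by
          refine Finset.sum_le_sum fun j _ => ?_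
          calc ((s.sym j).image (fun m => (Sym.toMultiset m).sum)).card
              ≤ (s.sym j).card := Finset.card_image_le
            _ ≤ (s.card + j - 1).choose j := sym_card_le s j
            _ ≤ (j + k - 1).choose j := Nat.choose_le_choose j (by omega)
  refine ⟨key, le_trans ?_ key⟩
  apply Finset.card_le_card_of_injOn (fun α => ∑ e ∈ Sfun α, fe e)
  · intro α hα
    exact Finset.mem_image.2 ⟨Sfun α, Finset.mem_filter.2
      ⟨Finset.mem_powerset.2 (hSfun α hα).1, (hSfun α hα).2⟩, rfl⟩
  · intro a ha b hb hab
    by_contra hne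
    exact hdist a ha b hb hne hab
end
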